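/- arXiv:2006.16739 — 3 statements merged into one kernel-verified Lean document; each statement's English description precedes it below -/
import Mathlib

section
/- Let S : H₂ →L[ℂ] H₁ be bounded, m ∈ ℝ, λ > 0, and D_m(φ,ψ) = (mφ + Sψ, S*φ - mψ). If φ ∈ ker(S S* - λ) with φ ≠ 0, then the vector Φ = ((m + √(λ+m²))φ, S*φ) is nonzero and satisfies D_m Φ = √(λ+m²)·Φ. -/
open ContinuousLinearMap MeasureTheory

variable {H₁ H₂ : Type*}
  [NormedAddCommGroup H₁] [InnerProductSpace ℂ H₁] [CompleteSpace H₁]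
  [NormedAddCommGroup H₂] [InnerProductSpace ℂ H₂] [CompleteSpace H₂]

local notation "e" => WithLp.equiv 2 (H₁ × H₂)

theorem eigvec_plus (S : H₂ →L[ℂ] H₁) (m : ℝ) (lam : ℝ) (hlam : 0 < lam)
    (D : WithLp 2 (H₁ × H₂) →L[ℂ] WithLp 2 (H₁ × H₂))
    (hD : ∀ (φ : H₁) (ψ : H₂), D ((e).symm (φ, ψ)) =
      (e).symm ((m : ℂ) • φ + S ψ, (adjoint S) φ - (m : ℂ) • ψ))
    (φ : H₁) (hφ : φ ≠ 0) (hker : S ((adjoint S) φ) = (lam : ℂ) • φ) :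
    (e).symm ((((m : ℂ) + (Real.sqrt (lam + m ^ 2) : ℂ))) • φ, (adjoint S) φ) ≠ 0 ∧
    D ((e).symm ((((m : ℂ) + (Real.sqrt (lam + m ^ 2) : ℂ))) • φ, (adjoint S) φ)) =
      (Real.sqrt (lam + m ^ 2) : ℂ) •
        (e).symm ((((m : ℂ) + (Real.sqrt (lam + m ^ 2) : ℂ))) • φ, (adjoint S) φ) := by
  set r : ℝ := Real.sqrt (lam + m ^ 2) with hr
  have hnn : (0:ℝ) ≤ lam + m ^ 2 := by positivity
  have hr2 : r ^ 2 = lam + m ^ 2 := Real.sq_sqrt hnn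
  have hrm : |m| < r := by
    nlinarith [Real.sqrt_nonneg (lam + m ^ 2), abs_nonneg m, sq_abs m]
  have hmr : (0:ℝ) < m + r := by
    have := abs_lt.mp hrm
    linarith [this.1]
  have hmrC : ((m : ℂ) + (r : ℂ)) ≠ 0 := by
    have h' : ((m + r : ℝ) : ℂ) ≠ 0 := by exact_mod_cast (ne_of_gt hmr)
    push_cast at h'
    exact h'
  constructor
  · intro h
    have h2 : ((((m : ℂ) + (r : ℂ))) • φ, (adjoint S) φ) = ((0 : H₁), (0 : H₂)) := by
      have := congrArg (e) h
      simpa using this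
    have h3 : ((m : ℂ) + (r : ℂ)) • φ = 0 := congrArg Prod.fst h2
    exact hφ ((smul_eq_zero.mp h3).resolve_left hmrC)
  · rw [hD]
    have hc : ((r : ℂ))^2 = (lam : ℂ) + (m : ℂ)^2 := by exact_mod_cast congrArg Complex.ofReal hr2
    have h1 : (m:ℂ) • (((m:ℂ)+(r:ℂ)) • φ) + S ((adjoint S) φ) = (r:ℂ) • (((m:ℂ)+(r:ℂ)) • φ) := by
      rw [hker, smul_smul, smul_smul, ← add_smul]
      congr 1
      linear_combination -hc
    have h2 : (adjoint S) (((m:ℂ)+(r:ℂ)) • φ) - (m:ℂ) • (adjoint S) φ = (r:ℂ) • (adjoint S) φ := by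
      rw [ContinuousLinearMap.map_smul, add_smul]
      abel
    rw [h1, h2]
    rfl
end

section
/- Let S : H₂ →L[ℂ] H₁ be bounded, m ∈ ℝ, λ > 0, and D_m(φ,ψ) = (mφ + Sψ, S*φ - mψ). If ψ ∈ ker(S* S - λ) with ψ ≠ 0, then the vector Ψ = (Sψ, -(m + √(λ+m²))ψ) is nonzero and satisfies D_m Ψ = -√(λ+m²)·Ψ. -/
open ContinuousLinearMap MeasureTheory

variable {H₁ H₂ : Type*}
  [NormedAddCommGroup H₁] [InnerProductSpace ℂ H₁] [CompleteSpace H₁]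
  [NormedAddCommGroup H₂] [InnerProductSpace ℂ H₂] [CompleteSpace H₂]

local notation "e" => WithLp.equiv 2 (H₁ × H₂)

theorem eigvec_minus (S : H₂ →L[ℂ] H₁) (m : ℝ) (lam : ℝ) (hlam : 0 < lam)
    (D : WithLp 2 (H₁ × H₂) →L[ℂ] WithLp 2 (H₁ × H₂))
    (hD : ∀ (φ : H₁) (ψ : H₂), D ((e).symm (φ, ψ)) =
      (e).symm ((m : ℂ) • φ + S ψ, (adjoint S) φ - (m : ℂ) • ψ))
    (ψ : H₂) (hψ : ψ ≠ 0) (hker : (adjoint S) (S ψ) = (lam : ℂ) • ψ) :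
    (e).symm (S ψ, -(((m : ℂ) + (Real.sqrt (lam + m ^ 2) : ℂ))) • ψ) ≠ 0 ∧
    D ((e).symm (S ψ, -(((m : ℂ) + (Real.sqrt (lam + m ^ 2) : ℂ))) • ψ)) =
      (-(Real.sqrt (lam + m ^ 2) : ℂ)) •
        (e).symm (S ψ, -(((m : ℂ) + (Real.sqrt (lam + m ^ 2) : ℂ))) • ψ) := by
  set μ : ℝ := Real.sqrt (lam + m ^ 2) with hμ
  have hpos : 0 < lam + m ^ 2 := by positivity
  have hμsq : μ ^ 2 = lam + m ^ 2 := Real.sq_sqrt hpos.le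
  have hμsqC : (μ : ℂ) ^ 2 = (lam : ℂ) + (m : ℂ) ^ 2 := by
    rw [← Complex.ofReal_pow, hμsq]; push_cast; ring
  have hmμ : m + μ ≠ 0 := by
    have h1 : |m| < μ := by
      rw [hμ, ← Real.sqrt_sq_eq_abs]
      exact Real.sqrt_lt_sqrt (sq_nonneg m) (by linarith)
    have h2 := abs_lt.mp h1
    linarith
  have hmμC : ((m : ℂ) + (μ : ℂ)) ≠ 0 := by
    rw [← Complex.ofReal_add]
    exact Complex.ofReal_ne_zero.mpr hmμ
  constructor
  · intro h
    apply hψ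
    have h2 := congrArg (fun x => ((e) x).2) h
    simp only [Equiv.apply_symm_apply] at h2
    have h3 : -((m : ℂ) + (μ : ℂ)) • ψ = 0 := h2
    rcases smul_eq_zero.mp h3 with h | h
    · exact absurd (neg_eq_zero.mp h) hmμC
    · exact h
  · rw [hD, WithLp.equiv_symm_apply, ← WithLp.toLp_smul]
    apply congrArg
    rw [Prod.smul_mk]
    refine Prod.ext ?_ ?_
    · show (m:ℂ) • S ψ + S (-((m:ℂ) + (μ:ℂ)) • ψ) = -(μ:ℂ) • S ψ
      rw [S.map_smul, neg_smul, ← sub_eq_add_neg, ← sub_smul]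
      congr 1
      ring
    · have hsc : (lam : ℂ) = -(μ:ℂ) * -((m:ℂ) + (μ:ℂ)) + (m:ℂ) * -((m:ℂ) + (μ:ℂ)) := by
        linear_combination -hμsqC
      rw [hker, smul_smul, smul_smul, sub_eq_iff_eq_add, ← add_smul, ← hsc]
end

section
/- Let S : H₂ →L[ℂ] H₁ be bounded, m ∈ ℝ, λ > 0. Then dim ker(D_m - √(λ+m²)) = dim ker(S S* - λ) and dim ker(D_m + √(λ+m²)) = dim ker(S* S - λ), where D_m(φ,ψ) = (mφ + Sψ, S*φ - mψ) on H₁ × H₂. -/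
open ContinuousLinearMap MeasureTheory

universe u v

variable {H₁ : Type u} {H₂ : Type v}
  [NormedAddCommGroup H₁] [InnerProductSpace ℂ H₁] [CompleteSpace H₁]
  [NormedAddCommGroup H₂] [InnerProductSpace ℂ H₂] [CompleteSpace H₂]

local notation "e" => WithLp.equiv 2 (H₁ × H₂)

set_option maxHeartbeats 1600000 in
theorem dim_ker_eq (S : H₂ →L[ℂ] H₁) (m : ℝ) (lam : ℝ) (hlam : 0 < lam)
    (D : WithLp 2 (H₁ × H₂) →L[ℂ] WithLp 2 (H₁ × H₂))
    (hD : ∀ (φ : H₁) (ψ : H₂), D ((e).symm (φ, ψ)) =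
      (e).symm ((m : ℂ) • φ + S ψ, (adjoint S) φ - (m : ℂ) • ψ)) :
    Module.rank ℂ (LinearMap.ker ((D - (Real.sqrt (lam + m ^ 2) : ℂ) •
        (1 : WithLp 2 (H₁ × H₂) →L[ℂ] WithLp 2 (H₁ × H₂)) : WithLp 2 (H₁ × H₂) →ₗ[ℂ] WithLp 2 (H₁ × H₂)))) =
      Cardinal.lift.{max u v}
        (Module.rank ℂ (LinearMap.ker ((S ∘L adjoint S - (lam : ℂ) • (1 : H₁ →L[ℂ] H₁) : H₁ →L[ℂ] H₁) : H₁ →ₗ[ℂ] H₁))) ∧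
    Module.rank ℂ (LinearMap.ker ((D + (Real.sqrt (lam + m ^ 2) : ℂ) •
        (1 : WithLp 2 (H₁ × H₂) →L[ℂ] WithLp 2 (H₁ × H₂)) : WithLp 2 (H₁ × H₂) →ₗ[ℂ] WithLp 2 (H₁ × H₂)))) =
      Cardinal.lift.{max u v}
        (Module.rank ℂ (LinearMap.ker ((adjoint S ∘L S - (lam : ℂ) • (1 : H₂ →L[ℂ] H₂) : H₂ →L[ℂ] H₂) : H₂ →ₗ[ℂ] H₂))) := by
  have hlm : (0:ℝ) ≤ lam + m ^ 2 := by positivity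
  set r : ℝ := Real.sqrt (lam + m ^ 2) with hrdef
  have hr2 : r ^ 2 = lam + m ^ 2 := Real.sq_sqrt hlm
  have hr0 : 0 ≤ r := Real.sqrt_nonneg _
  have hrm : m < r := by nlinarith
  have hrm' : -r < m := by nlinarith
  have hc : ((r : ℂ) + (m : ℂ)) ≠ 0 := by
    intro h
    have : (r + m : ℝ) = 0 := by exact_mod_cast h
    linarith
  have hr2c : ((r : ℂ)) ^ 2 = (lam : ℂ) + (m : ℂ) ^ 2 := by exact_mod_cast hr2
  have hk1 : ((r:ℂ) + m) * ((r:ℂ) - m) = (lam : ℂ) := by linear_combination hr2c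
  have hk2 : (((r:ℂ) + m))⁻¹ * (lam : ℂ) = (r:ℂ) - m := by
    rw [inv_mul_eq_div, div_eq_iff hc]
    linear_combination -hr2c
  have hDiag : ∀ (c : ℂ) (x : WithLp 2 (H₁ × H₂)),
      D x = c • x ↔
      ((m:ℂ) • ((e) x).1 + S (((e) x).2) = c • ((e) x).1 ∧
        adjoint S (((e) x).1) - (m:ℂ) • ((e) x).2 = c • ((e) x).2) := by
    intro c x
    have hDx : D x = (e).symm ((m:ℂ) • ((e) x).1 + S (((e) x).2),
        adjoint S (((e) x).1) - (m:ℂ) • ((e) x).2) := by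
      conv_lhs => rw [← (e).symm_apply_apply x]
      exact hD _ _
    rw [hDx, Equiv.symm_apply_eq,
      (show ∀ y : WithLp 2 (H₁ × H₂), (e) (c • y) = c • (e) y from fun _ => rfl), Prod.ext_iff]
    simp
  have hmemD : ∀ (c : ℂ) (x : WithLp 2 (H₁ × H₂)),
      x ∈ LinearMap.ker ((D - c • (1 : WithLp 2 (H₁ × H₂) →L[ℂ] WithLp 2 (H₁ × H₂))) : WithLp 2 (H₁ × H₂) →ₗ[ℂ] WithLp 2 (H₁ × H₂)) ↔
      ((m:ℂ) • ((e) x).1 + S (((e) x).2) = c • ((e) x).1 ∧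
        adjoint S (((e) x).1) - (m:ℂ) • ((e) x).2 = c • ((e) x).2) := by
    intro c x
    rw [LinearMap.mem_ker, LinearMap.sub_apply, LinearMap.smul_apply, ContinuousLinearMap.coe_coe,
      ContinuousLinearMap.coe_coe, ContinuousLinearMap.one_apply, sub_eq_zero]
    exact hDiag c x
  have hmemD' : ∀ (x : WithLp 2 (H₁ × H₂)),
      x ∈ LinearMap.ker ((D + ((r : ℝ) : ℂ) •
        (1 : WithLp 2 (H₁ × H₂) →L[ℂ] WithLp 2 (H₁ × H₂))) : WithLp 2 (H₁ × H₂) →ₗ[ℂ] WithLp 2 (H₁ × H₂)) ↔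
      ((m:ℂ) • ((e) x).1 + S (((e) x).2) = (-((r:ℂ))) • ((e) x).1 ∧
        adjoint S (((e) x).1) - (m:ℂ) • ((e) x).2 = (-((r:ℂ))) • ((e) x).2) := by
    intro x
    rw [LinearMap.mem_ker, LinearMap.add_apply, LinearMap.smul_apply, ContinuousLinearMap.coe_coe,
      ContinuousLinearMap.coe_coe, ContinuousLinearMap.one_apply, add_eq_zero_iff_eq_neg, ← neg_smul]
    exact hDiag _ x
  have hmem1 : ∀ (φ : H₁),
      φ ∈ LinearMap.ker ((S ∘L adjoint S - (lam : ℂ) • (1 : H₁ →L[ℂ] H₁) : H₁ →L[ℂ] H₁) : H₁ →ₗ[ℂ] H₁) ↔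
      S (adjoint S φ) = (lam : ℂ) • φ := by
    intro φ
    rw [LinearMap.mem_ker]
    simp [sub_eq_zero]
  have hmem2 : ∀ (ψ : H₂),
      ψ ∈ LinearMap.ker ((adjoint S ∘L S - (lam : ℂ) • (1 : H₂ →L[ℂ] H₂) : H₂ →L[ℂ] H₂) : H₂ →ₗ[ℂ] H₂) ↔
      adjoint S (S ψ) = (lam : ℂ) • ψ := by
    intro ψ
    rw [LinearMap.mem_ker]
    simp [sub_eq_zero]
  constructor
  · -- first equality
    have E1 : (LinearMap.ker ((S ∘L adjoint S - (lam : ℂ) • (1 : H₁ →L[ℂ] H₁) : H₁ →L[ℂ] H₁) : H₁ →ₗ[ℂ] H₁)) ≃ₗ[ℂ]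
        (LinearMap.ker ((D - ((r : ℝ) : ℂ) •
          (1 : WithLp 2 (H₁ × H₂) →L[ℂ] WithLp 2 (H₁ × H₂))) : WithLp 2 (H₁ × H₂) →ₗ[ℂ] WithLp 2 (H₁ × H₂))) :=
      { toFun := fun φ => ⟨(e).symm ((φ : H₁), (((r:ℂ) + m))⁻¹ • adjoint S (φ : H₁)), by
          rw [hmemD]
          simp only [Equiv.apply_symm_apply]
          have hφ := (hmem1 φ).mp φ.2
          constructor
          · rw [_root_.map_smul, hφ, smul_smul, hk2]
            module
          · match_scalars
            field_simp
            ring⟩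
        map_add' := by
          intro φ φ'
          apply Subtype.ext
          simp only [Submodule.coe_add, map_add, smul_add, ← (show ∀ x y : H₁ × H₂, (e).symm (x + y) = (e).symm x + (e).symm y from fun _ _ => rfl),
            Prod.mk_add_mk]
        map_smul' := by
          intro a φ
          apply Subtype.ext
          simp only [SetLike.val_smul, RingHom.id_apply, _root_.map_smul,
            ← (show ∀ (c : ℂ) (x : H₁ × H₂), (e).symm (c • x) = c • (e).symm x from fun _ _ => rfl), Prod.smul_mk]
          rw [smul_comm]
        invFun := fun x => ⟨((e) (x : WithLp 2 (H₁ × H₂))).1, by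
          obtain ⟨h1, h2⟩ := (hmemD _ _).mp x.2
          rw [hmem1]
          have h2' : adjoint S ((e) (x : WithLp 2 (H₁ × H₂))).1 =
              ((r:ℂ) + m) • ((e) (x : WithLp 2 (H₁ × H₂))).2 := by
            have := sub_eq_iff_eq_add.mp h2
            rw [this]; module
          have h1' : S ((e) (x : WithLp 2 (H₁ × H₂))).2 =
              ((r:ℂ) - m) • ((e) (x : WithLp 2 (H₁ × H₂))).1 := by
            have := eq_sub_of_add_eq' h1
            rw [this]; module
          rw [h2', _root_.map_smul, h1', smul_smul, hk1]⟩
        left_inv := by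
          intro φ
          apply Subtype.ext
          simp only [Equiv.apply_symm_apply]
        right_inv := by
          intro x
          apply Subtype.ext
          obtain ⟨h1, h2⟩ := (hmemD _ _).mp x.2
          have h2' : adjoint S ((e) (x : WithLp 2 (H₁ × H₂))).1 =
              ((r:ℂ) + m) • ((e) (x : WithLp 2 (H₁ × H₂))).2 := by
            have := sub_eq_iff_eq_add.mp h2
            rw [this]; module
          show (e).symm (((e) (x : WithLp 2 (H₁ × H₂))).1,
              (((r:ℂ) + m))⁻¹ • adjoint S ((e) (x : WithLp 2 (H₁ × H₂))).1) = x
          rw [h2', inv_smul_smul₀ hc]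
          exact (e).symm_apply_apply _ }
    have h := E1.lift_rank_eq.symm
    rwa [Cardinal.lift_id'.{u, v}] at h
  · -- second equality
    have E2 : (LinearMap.ker ((adjoint S ∘L S - (lam : ℂ) • (1 : H₂ →L[ℂ] H₂) : H₂ →L[ℂ] H₂) : H₂ →ₗ[ℂ] H₂)) ≃ₗ[ℂ]
        (LinearMap.ker ((D + ((r : ℝ) : ℂ) •
          (1 : WithLp 2 (H₁ × H₂) →L[ℂ] WithLp 2 (H₁ × H₂))) : WithLp 2 (H₁ × H₂) →ₗ[ℂ] WithLp 2 (H₁ × H₂))) :=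
      { toFun := fun ψ => ⟨(e).symm ((-(((r:ℂ) + m))⁻¹) • S (ψ : H₂), (ψ : H₂)), by
          rw [hmemD']
          simp only [Equiv.apply_symm_apply]
          have hψ := (hmem2 ψ).mp ψ.2
          constructor
          · match_scalars
            field_simp
            ring
          · rw [_root_.map_smul, hψ, smul_smul,
              show (-(((r:ℂ) + m))⁻¹) * (lam : ℂ) = -((r:ℂ) - m) from by
                rw [neg_mul, hk2]]
            module⟩
        map_add' := by
          intro ψ ψ'
          apply Subtype.ext
          simp only [Submodule.coe_add, map_add, smul_add, ← (show ∀ x y : H₁ × H₂, (e).symm (x + y) = (e).symm x + (e).symm y from fun _ _ => rfl),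
            Prod.mk_add_mk]
        map_smul' := by
          intro a ψ
          apply Subtype.ext
          simp only [SetLike.val_smul, RingHom.id_apply, _root_.map_smul,
            ← (show ∀ (c : ℂ) (x : H₁ × H₂), (e).symm (c • x) = c • (e).symm x from fun _ _ => rfl), Prod.smul_mk]
          rw [smul_comm]
        invFun := fun x => ⟨((e) (x : WithLp 2 (H₁ × H₂))).2, by
          obtain ⟨h1, h2⟩ := (hmemD' _).mp x.2
          rw [hmem2]
          have h1' : S ((e) (x : WithLp 2 (H₁ × H₂))).2 =
              (-((r:ℂ) + m)) • ((e) (x : WithLp 2 (H₁ × H₂))).1 := by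
            have := eq_sub_of_add_eq' h1
            rw [this]; module
          have h2' : adjoint S ((e) (x : WithLp 2 (H₁ × H₂))).1 =
              ((m:ℂ) - (r:ℂ)) • ((e) (x : WithLp 2 (H₁ × H₂))).2 := by
            have := sub_eq_iff_eq_add.mp h2
            rw [this]; module
          rw [h1', _root_.map_smul, h2', smul_smul,
            show (-((r:ℂ) + m)) * ((m:ℂ) - (r:ℂ)) = (lam : ℂ) from by
              linear_combination hr2c]⟩
        left_inv := by
          intro ψ
          apply Subtype.ext
          simp only [Equiv.apply_symm_apply]
        right_inv := by
          intro x
          apply Subtype.ext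
          obtain ⟨h1, h2⟩ := (hmemD' _).mp x.2
          have h1' : S ((e) (x : WithLp 2 (H₁ × H₂))).2 =
              (-((r:ℂ) + m)) • ((e) (x : WithLp 2 (H₁ × H₂))).1 := by
            have := eq_sub_of_add_eq' h1
            rw [this]; module
          show (e).symm ((-(((r:ℂ) + m))⁻¹) • S ((e) (x : WithLp 2 (H₁ × H₂))).2,
              ((e) (x : WithLp 2 (H₁ × H₂))).2) = x
          rw [h1', smul_smul,
            show (-(((r:ℂ) + m))⁻¹) * (-((r:ℂ) + m)) = 1 from by field_simp, one_smul]
          exact (e).symm_apply_apply _ }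
    have h := E2.lift_rank_eq.symm
    rwa [Cardinal.lift_id'.{v, u}] at h
end
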